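/- The angular spectrum representation solves the Helmholtz equation: the function u is twice continuously differentiable on the open half-plane {(x₁,x₂) ∈ ℝ² : x₂ > h} and satisfies ∂²u/∂x₁² + ∂²u/∂x₂² + k² u = 0 there. -/

import Mathlib

open MeasureTheory

noncomputable def rho (w : ℂ) : ℂ :=
  (Real.sqrt ((‖w‖ + w.re) / 2) : ℝ) +
    Complex.I * (Real.sqrt ((‖w‖ - w.re) / 2) : ℝ)

lemma rho_im_nonneg (w : ℂ) : 0 ≤ (rho w).im := by
  have : (rho w).im = Real.sqrt ((‖w‖ - w.re) / 2) := by
    simp [rho, Complex.add_im, Complex.mul_im]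
  rw [this]; exact Real.sqrt_nonneg _

lemma rho_sq (w : ℂ) (hw : 0 ≤ w.im) : rho w ^ 2 = w := by
  have h1 : 0 ≤ (‖w‖ + w.re) / 2 := by
    have := neg_abs_le w.re
    have := Complex.abs_re_le_norm w
    linarith [abs_nonneg w.re]
  have h2 : 0 ≤ (‖w‖ - w.re) / 2 := by
    have := Complex.abs_re_le_norm w
    have := le_abs_self w.re
    linarith
  set a := Real.sqrt ((‖w‖ + w.re) / 2) with ha
  set b := Real.sqrt ((‖w‖ - w.re) / 2) with hb
  have hs1 : a ^ 2 = (‖w‖ + w.re) / 2 := Real.sq_sqrt h1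
  have hs2 : b ^ 2 = (‖w‖ - w.re) / 2 := Real.sq_sqrt h2
  have hprod : a * b = w.im / 2 := by
    rw [ha, hb, ← Real.sqrt_mul h1]
    have : (‖w‖ + w.re) / 2 * ((‖w‖ - w.re) / 2) = (w.im / 2) ^ 2 := by
      have habs : ‖w‖ ^ 2 = w.re ^ 2 + w.im ^ 2 := by
        rw [Complex.sq_norm, Complex.normSq_apply]; ring
      nlinarith [habs]
    rw [this, Real.sqrt_sq (by positivity)]
  have : rho w = Complex.mk a b := by
    apply Complex.ext <;>
      simp only [rho, Complex.add_re, Complex.add_im, Complex.mul_re, Complex.mul_im,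
        Complex.ofReal_re, Complex.ofReal_im, Complex.I_re, Complex.I_im] <;> ring
  rw [this]
  apply Complex.ext
  · simp [pow_two, Complex.mul_re]
    nlinarith [hs1, hs2]
  · simp [pow_two, Complex.mul_im]
    nlinarith [hprod]

lemma rho_abs_le (w : ℂ) (hw : 0 ≤ w.im) : ‖rho w‖ ^ 2 = ‖w‖ := by
  rw [← norm_pow, rho_sq w hw]

noncomputable def rr (k : ℂ) (ξ : ℝ) : ℂ := rho (k ^ 2 - (ξ : ℂ) ^ 2)

lemma continuous_rho : Continuous rho := by
  unfold rho
  exact (Complex.continuous_ofReal.comp ((Real.continuous_sqrt.comp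
      (((continuous_norm.add Complex.continuous_re).div_const 2))))).add
    (continuous_const.mul (Complex.continuous_ofReal.comp ((Real.continuous_sqrt.comp
      (((continuous_norm.sub Complex.continuous_re).div_const 2))))))

lemma continuous_rr (k : ℂ) : Continuous (rr k) := by
  apply continuous_rho.comp
  fun_prop

lemma im_sub_sq (k : ℂ) (hk : 0 ≤ (k ^ 2).im) (ξ : ℝ) : 0 ≤ (k ^ 2 - (ξ : ℂ) ^ 2).im := by
  rw [Complex.sub_im]
  have h0 : ((ξ : ℂ) ^ 2).im = 0 := by
    simp [pow_two, Complex.mul_im]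
  rw [h0]
  simpa using hk

lemma rr_sq (k : ℂ) (hk : 0 ≤ (k ^ 2).im) (ξ : ℝ) : rr k ξ ^ 2 = k ^ 2 - (ξ : ℂ) ^ 2 :=
  rho_sq _ (im_sub_sq k hk ξ)

lemma im_rr_nonneg (k : ℂ) (ξ : ℝ) : 0 ≤ (rr k ξ).im := rho_im_nonneg _

lemma abs_rr_le (k : ℂ) (hk : 0 ≤ (k ^ 2).im) (ξ : ℝ) :
    ‖rr k ξ‖ ≤ ‖k‖ + |ξ| := by
  have h1 : ‖rr k ξ‖ ^ 2 = ‖k ^ 2 - (ξ : ℂ) ^ 2‖ := by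
    rw [← norm_pow, rr_sq k hk]
  have h2 : ‖k ^ 2 - (ξ : ℂ) ^ 2‖ ≤ (‖k‖ + |ξ|) ^ 2 := by
    calc ‖k ^ 2 - (ξ : ℂ) ^ 2‖ ≤ ‖k ^ 2‖ + ‖(ξ : ℂ) ^ 2‖ :=
          (norm_sub_le _ _)
      _ = ‖k‖ ^ 2 + |ξ| ^ 2 := by
          simp [norm_pow, Complex.norm_real]
      _ ≤ (‖k‖ + |ξ|) ^ 2 := by nlinarith [norm_nonneg k, abs_nonneg ξ]
  nlinarith [norm_nonneg (rr k ξ), norm_nonneg k,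
    abs_nonneg ξ]

noncomputable def ee (k : ℂ) (h : ℝ) (q : ℝ × ℝ) (ξ : ℝ) : ℂ :=
  Complex.exp (Complex.I * (((q.2 - h : ℝ) : ℂ) * rr k ξ + (q.1 : ℂ) * (ξ : ℂ)))

lemma abs_ee_le (k : ℂ) (h : ℝ) (q : ℝ × ℝ) (hq : h ≤ q.2) (ξ : ℝ) :
    ‖ee k h q ξ‖ ≤ 1 := by
  rw [ee, Complex.norm_exp]
  apply Real.exp_le_one_iff.mpr ?_
  have : (Complex.I * (((q.2 - h : ℝ) : ℂ) * rr k ξ + (q.1 : ℂ) * (ξ : ℂ))).re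
      = -((q.2 - h) * (rr k ξ).im) := by
    simp [Complex.mul_re, Complex.mul_im, Complex.add_im]
  rw [this]
  have := im_rr_nonneg k ξ
  nlinarith

lemma one_add_pow_le (x : ℝ) (n : ℕ) : (1 + |x|) ^ n ≤ 2 ^ n * (1 + |x| ^ n) := by
  rcases le_total |x| 1 with hx | hx
  · calc (1 + |x|) ^ n ≤ 2 ^ n := by
          apply pow_le_pow_left₀ (by positivity) (by linarith)
      _ ≤ 2 ^ n * (1 + |x| ^ n) := by
          nlinarith [pow_nonneg (abs_nonneg x) n, pow_pos (show (0:ℝ) < 2 by norm_num) n]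
  · calc (1 + |x|) ^ n ≤ (2 * |x|) ^ n := by
          apply pow_le_pow_left₀ (by positivity) (by linarith)
      _ = 2 ^ n * |x| ^ n := mul_pow 2 |x| n
      _ ≤ 2 ^ n * (1 + |x| ^ n) := by
          nlinarith [pow_pos (show (0:ℝ) < 2 by norm_num) n]

lemma schwartz_poly_integrable (F : SchwartzMap ℝ ℂ) (n : ℕ) :
    Integrable (fun ξ : ℝ => (1 + |ξ|) ^ n * ‖F ξ‖) := by
  have h1 : Integrable (fun ξ : ℝ => (2:ℝ) ^ n * (‖ξ‖ ^ 0 * ‖F ξ‖) + 2 ^ n * (‖ξ‖ ^ n * ‖F ξ‖)) :=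
    ((F.integrable_pow_mul (volume) 0).const_mul ((2:ℝ) ^ n)).add
      ((F.integrable_pow_mul (volume) n).const_mul ((2:ℝ) ^ n))
  apply Integrable.mono' h1
  · apply Continuous.aestronglyMeasurable
    exact ((continuous_const.add (_root_.continuous_abs)).pow n).mul (F.continuous.norm)
  · filter_upwards with ξ
    rw [Real.norm_of_nonneg (by positivity)]
    have := one_add_pow_le ξ n
    have hF := norm_nonneg (F ξ)
    have : (1 + |ξ|) ^ n * ‖F ξ‖ ≤ 2 ^ n * (1 + |ξ| ^ n) * ‖F ξ‖ := by nlinarith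
    calc (1 + |ξ|) ^ n * ‖F ξ‖ ≤ 2 ^ n * (1 + |ξ| ^ n) * ‖F ξ‖ := this
      _ = 2 ^ n * (‖ξ‖ ^ 0 * ‖F ξ‖) + 2 ^ n * (‖ξ‖ ^ n * ‖F ξ‖) := by
          rw [Real.norm_eq_abs]; ring

def Good (k : ℂ) (c : ℝ → ℂ) : Prop :=
  Continuous c ∧ ∃ C n, 0 ≤ C ∧ ∀ ξ : ℝ, ‖c ξ‖ ≤ C * (1 + |ξ|) ^ n

lemma good_one (k : ℂ) : Good k (fun _ => 1) := by
  refine ⟨continuous_const, 1, 0, zero_le_one, fun ξ => ?_⟩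
  simp

lemma good_mul_xi (k : ℂ) {c : ℝ → ℂ} (hc : Good k c) :
    Good k (fun ξ => Complex.I * (ξ : ℂ) * c ξ) := by
  obtain ⟨hcont, C, n, hC, hb⟩ := hc
  refine ⟨by fun_prop, C, n + 1, hC, fun ξ => ?_⟩
  have h1 : ‖Complex.I * (ξ : ℂ) * c ξ‖ = |ξ| * ‖c ξ‖ := by
    simp [map_mul, Complex.norm_real]
  rw [h1, pow_succ]
  have := hb ξ
  have h2 : (0:ℝ) ≤ (1 + |ξ|) ^ n := by positivity
  nlinarith [abs_nonneg ξ, norm_nonneg (c ξ)]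

lemma good_mul_rr (k : ℂ) (hk : 0 ≤ (k ^ 2).im) {c : ℝ → ℂ} (hc : Good k c) :
    Good k (fun ξ => Complex.I * rr k ξ * c ξ) := by
  obtain ⟨hcont, C, n, hC, hb⟩ := hc
  refine ⟨by exact (continuous_const.mul (continuous_rr k)).mul hcont,
    (‖k‖ + 1) * C, n + 1, by positivity, fun ξ => ?_⟩
  have h1 : ‖Complex.I * rr k ξ * c ξ‖
      = ‖rr k ξ‖ * ‖c ξ‖ := by
    simp [map_mul]
  rw [h1, pow_succ]
  have h2 := abs_rr_le k hk ξ
  have h3 := hb ξ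
  have h4 : (0:ℝ) ≤ (1 + |ξ|) ^ n := by positivity
  have h5 : ‖rr k ξ‖ ≤ (‖k‖ + 1) * (1 + |ξ|) := by
    nlinarith [abs_nonneg ξ, norm_nonneg k]
  calc ‖rr k ξ‖ * ‖c ξ‖
      ≤ ((‖k‖ + 1) * (1 + |ξ|)) * (C * (1 + |ξ|) ^ n) := by
        apply mul_le_mul h5 h3 (norm_nonneg _) (by positivity)
    _ = (‖k‖ + 1) * C * ((1 + |ξ|) ^ n * (1 + |ξ|)) := by ring

noncomputable def UU (k : ℂ) (h : ℝ) (F : SchwartzMap ℝ ℂ) (c : ℝ → ℂ) (q : ℝ × ℝ) : ℂ :=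
  ∫ ξ : ℝ, ee k h q ξ * (c ξ * F ξ)

lemma integrand_aesm (k : ℂ) (h : ℝ) (F : SchwartzMap ℝ ℂ) {c : ℝ → ℂ} (hc : Good k c)
    (q : ℝ × ℝ) : AEStronglyMeasurable (fun ξ : ℝ => ee k h q ξ * (c ξ * F ξ)) volume := by
  apply Continuous.aestronglyMeasurable
  apply Continuous.mul ?_ (hc.1.mul F.continuous)
  apply Complex.continuous_exp.comp
  have := continuous_rr k
  fun_prop

lemma integrand_bound (k : ℂ) (h : ℝ) (F : SchwartzMap ℝ ℂ) {c : ℝ → ℂ} {C : ℝ} {n : ℕ}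
    (hC : 0 ≤ C) (hb : ∀ ξ : ℝ, ‖c ξ‖ ≤ C * (1 + |ξ|) ^ n)
    (q : ℝ × ℝ) (hq : h ≤ q.2) (ξ : ℝ) :
    ‖ee k h q ξ * (c ξ * F ξ)‖ ≤ C * ((1 + |ξ|) ^ n * ‖F ξ‖) := by
  rw [norm_mul, norm_mul]
  have h1 := abs_ee_le k h q hq ξ
  have h2 := hb ξ
  have h3 : (0:ℝ) ≤ (1 + |ξ|) ^ n := by positivity
  calc ‖ee k h q ξ‖ * (‖c ξ‖ * ‖F ξ‖) ≤ 1 * (C * (1 + |ξ|) ^ n * ‖F ξ‖) := by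
        apply mul_le_mul h1 ?_ (by positivity) zero_le_one
        exact mul_le_mul_of_nonneg_right h2 (norm_nonneg _)
    _ = C * ((1 + |ξ|) ^ n * ‖F ξ‖) := by ring

lemma integrand_integrable (k : ℂ) (h : ℝ) (F : SchwartzMap ℝ ℂ) {c : ℝ → ℂ} (hc : Good k c)
    (q : ℝ × ℝ) (hq : h ≤ q.2) :
    Integrable (fun ξ : ℝ => ee k h q ξ * (c ξ * F ξ)) := by
  obtain ⟨hcont, C, n, hC, hb⟩ := hc
  apply Integrable.mono' (((schwartz_poly_integrable F n).const_mul C))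
    (integrand_aesm k h F ⟨hcont, C, n, hC, hb⟩ q)
  filter_upwards with ξ
  exact integrand_bound k h F hC hb q hq ξ

lemma eventually_halfplane {h : ℝ} {p : ℝ × ℝ} (hp : h < p.2) :
    ∀ᶠ q : ℝ × ℝ in nhds p, h < q.2 := by
  have : IsOpen {q : ℝ × ℝ | h < q.2} := isOpen_lt continuous_const continuous_snd
  exact this.mem_nhds hp

lemma continuousAt_UU (k : ℂ) (h : ℝ) (F : SchwartzMap ℝ ℂ) {c : ℝ → ℂ} (hc : Good k c)
    (p : ℝ × ℝ) (hp : h < p.2) : ContinuousAt (UU k h F c) p := by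
  obtain ⟨hcont, C, n, hC, hb⟩ := hc
  apply continuousAt_of_dominated (bound := fun ξ => C * ((1 + |ξ|) ^ n * ‖F ξ‖))
  · filter_upwards with q
    exact integrand_aesm k h F ⟨hcont, C, n, hC, hb⟩ q
  · filter_upwards [eventually_halfplane hp] with q hq
    filter_upwards with ξ
    exact integrand_bound k h F hC hb q hq.le ξ
  · exact (schwartz_poly_integrable F n).const_mul C
  · filter_upwards with ξ
    apply ContinuousAt.mul ?_ continuousAt_const
    apply Continuous.continuousAt
    apply Complex.continuous_exp.comp
    fun_prop

noncomputable def dCLM (a b : ℂ) : (ℝ × ℝ) →L[ℝ] ℂ :=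
  (ContinuousLinearMap.fst ℝ ℝ ℝ).smulRight a + (ContinuousLinearMap.snd ℝ ℝ ℝ).smulRight b

lemma dCLM_apply (a b : ℂ) (v : ℝ × ℝ) : dCLM a b v = v.1 • a + v.2 • b := by
  simp [dCLM]

lemma dCLM_norm_le (a b : ℂ) : ‖dCLM a b‖ ≤ ‖a‖ + ‖b‖ := by
  apply ContinuousLinearMap.opNorm_le_bound _ (by positivity)
  intro v
  rw [dCLM_apply]
  have h1 : ‖v.1 • a + v.2 • b‖ ≤ ‖v.1‖ * ‖a‖ + ‖v.2‖ * ‖b‖ := by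
    apply (norm_add_le _ _).trans
    rw [norm_smul, norm_smul]
  apply h1.trans
  have h2 : ‖v.1‖ ≤ ‖v‖ := norm_fst_le v
  have h3 : ‖v.2‖ ≤ ‖v‖ := norm_snd_le v
  have := norm_nonneg a; have := norm_nonneg b
  have := norm_nonneg v.1; have := norm_nonneg v.2
  nlinarith

lemma hasFDerivAt_integrand (k : ℂ) (h : ℝ) (ξ : ℝ) (m : ℂ) (q : ℝ × ℝ) :
    HasFDerivAt (fun q : ℝ × ℝ => ee k h q ξ * m)
      (dCLM (ee k h q ξ * (Complex.I * (ξ:ℂ) * m)) (ee k h q ξ * (Complex.I * rr k ξ * m))) q := by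
  have hz : HasFDerivAt
      (fun q : ℝ × ℝ => Complex.I * (((q.2 - h : ℝ) : ℂ) * rr k ξ + (q.1 : ℂ) * (ξ : ℂ)))
      (dCLM (Complex.I * (ξ:ℂ)) (Complex.I * rr k ξ)) q := by
    have h1 : (fun q : ℝ × ℝ =>
        Complex.I * (((q.2 - h : ℝ) : ℂ) * rr k ξ + (q.1 : ℂ) * (ξ : ℂ)))
        = fun q : ℝ × ℝ => dCLM (Complex.I * (ξ:ℂ)) (Complex.I * rr k ξ) q
            + (-h) • (Complex.I * rr k ξ) := by
      funext q
      rw [dCLM_apply]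
      simp only [Complex.real_smul]
      push_cast
      ring
    rw [h1]
    exact (dCLM (Complex.I * (ξ:ℂ)) (Complex.I * rr k ξ)).hasFDerivAt.add_const _
  have he := hz.cexp.mul_const m
  apply he.congr_fderiv
  apply ContinuousLinearMap.ext
  intro v
  simp only [ContinuousLinearMap.smulRight_apply, ContinuousLinearMap.smul_apply, dCLM_apply,
    smul_eq_mul, Complex.real_smul, ee]
  push_cast
  ring

lemma hasFDerivAt_UU (k : ℂ) (hk : 0 ≤ (k ^ 2).im) (h : ℝ) (F : SchwartzMap ℝ ℂ)
    {c : ℝ → ℂ} (hc : Good k c) (p : ℝ × ℝ) (hp : h < p.2) :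
    HasFDerivAt (UU k h F c)
      (dCLM (UU k h F (fun ξ => Complex.I * (ξ:ℂ) * c ξ) p)
            (UU k h F (fun ξ => Complex.I * rr k ξ * c ξ) p)) p := by
  set c₁ : ℝ → ℂ := fun ξ => Complex.I * (ξ:ℂ) * c ξ with hc₁def
  set c₂ : ℝ → ℂ := fun ξ => Complex.I * rr k ξ * c ξ with hc₂def
  have hgc₁ : Good k c₁ := good_mul_xi k hc
  have hgc₂ : Good k c₂ := good_mul_rr k hk hc
  obtain ⟨hcont₁, C₁, n₁, hC₁, hb₁⟩ := hgc₁
  obtain ⟨hcont₂, C₂, n₂, hC₂, hb₂⟩ := hgc₂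
  set ε := (p.2 - h) / 2 with hε
  have hε_pos : 0 < ε := by simp [hε]; linarith
  have hball : ∀ q ∈ Metric.ball p ε, h ≤ q.2 := by
    intro q hq
    have h1 : dist q.2 p.2 ≤ dist q p := by
      rw [Prod.dist_eq]; exact le_max_right _ _
    have h2 : dist q p < ε := Metric.mem_ball.mp hq
    rw [Real.dist_eq] at h1
    have := abs_sub_le_iff.mp (le_of_lt (lt_of_le_of_lt h1 h2))
    linarith [this.2]
  set A := ContinuousLinearMap.smulRightL ℝ (ℝ × ℝ) ℂ (ContinuousLinearMap.fst ℝ ℝ ℝ) with hA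
  set B := ContinuousLinearMap.smulRightL ℝ (ℝ × ℝ) ℂ (ContinuousLinearMap.snd ℝ ℝ ℝ) with hB
  have hAB : ∀ a b : ℂ, dCLM a b = A a + B b := by
    intro a b; rfl
  set F' : (ℝ × ℝ) → ℝ → (ℝ × ℝ) →L[ℝ] ℂ := fun q ξ =>
    dCLM (ee k h q ξ * (c₁ ξ * F ξ)) (ee k h q ξ * (c₂ ξ * F ξ)) with hF'
  have hint₁ : Integrable (fun ξ : ℝ => ee k h p ξ * (c₁ ξ * F ξ)) :=
    integrand_integrable k h F ⟨hcont₁, C₁, n₁, hC₁, hb₁⟩ p hp.le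
  have hint₂ : Integrable (fun ξ : ℝ => ee k h p ξ * (c₂ ξ * F ξ)) :=
    integrand_integrable k h F ⟨hcont₂, C₂, n₂, hC₂, hb₂⟩ p hp.le
  have key := hasFDerivAt_integral_of_dominated_of_fderiv_le
    (F := fun q ξ => ee k h q ξ * (c ξ * F ξ)) (F' := F')
    (μ := volume) (x₀ := p)
    (bound := fun ξ => C₁ * ((1 + |ξ|) ^ n₁ * ‖F ξ‖) + C₂ * ((1 + |ξ|) ^ n₂ * ‖F ξ‖))
    (Metric.ball_mem_nhds p hε_pos)
    (by filter_upwards with q; exact integrand_aesm k h F hc q)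
    (integrand_integrable k h F hc p hp.le)
    (by
      rw [hF']
      simp only [hAB]
      exact ((A.continuous.comp_aestronglyMeasurable hint₁.aestronglyMeasurable).add
        (B.continuous.comp_aestronglyMeasurable hint₂.aestronglyMeasurable)))
    (by
      filter_upwards with ξ
      intro q hq
      apply (dCLM_norm_le _ _).trans
      exact add_le_add (integrand_bound k h F hC₁ hb₁ q (hball q hq) ξ)
        (integrand_bound k h F hC₂ hb₂ q (hball q hq) ξ))
    (((schwartz_poly_integrable F n₁).const_mul C₁).add
      ((schwartz_poly_integrable F n₂).const_mul C₂))
    (by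
      filter_upwards with ξ
      intro q hq
      have := hasFDerivAt_integrand k h ξ (c ξ * F ξ) q
      apply this.congr_fderiv
      rw [hF']
      congr 1 <;> · simp only [hc₁def, hc₂def]; ring)
  have heq : (∫ ξ : ℝ, F' p ξ) = dCLM (UU k h F c₁ p) (UU k h F c₂ p) := by
    rw [hF']
    simp only [hAB]
    rw [integral_add (A.integrable_comp hint₁) (B.integrable_comp hint₂),
      A.integral_comp_comm hint₁, B.integral_comp_comm hint₂]
    rfl
  rw [← heq]
  exact key

lemma hasDerivAt_UU_fst (k : ℂ) (hk : 0 ≤ (k ^ 2).im) (h : ℝ) (F : SchwartzMap ℝ ℂ)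
    {c : ℝ → ℂ} (hc : Good k c) (x₁ x₂ : ℝ) (h2 : h < x₂) :
    HasDerivAt (fun s => UU k h F c (s, x₂))
      (UU k h F (fun ξ => Complex.I * (ξ:ℂ) * c ξ) (x₁, x₂)) x₁ := by
  have hf := hasFDerivAt_UU k hk h F hc (x₁, x₂) h2
  have hg : HasDerivAt (fun s : ℝ => ((s, x₂) : ℝ × ℝ)) ((1:ℝ), (0:ℝ)) x₁ :=
    (hasDerivAt_id x₁).prodMk (hasDerivAt_const x₁ x₂)
  have := hf.comp_hasDerivAt x₁ hg
  simp [dCLM_apply] at this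
  exact this

lemma hasDerivAt_UU_snd (k : ℂ) (hk : 0 ≤ (k ^ 2).im) (h : ℝ) (F : SchwartzMap ℝ ℂ)
    {c : ℝ → ℂ} (hc : Good k c) (x₁ x₂ : ℝ) (h2 : h < x₂) :
    HasDerivAt (fun t => UU k h F c (x₁, t))
      (UU k h F (fun ξ => Complex.I * rr k ξ * c ξ) (x₁, x₂)) x₂ := by
  have hf := hasFDerivAt_UU k hk h F hc (x₁, x₂) h2
  have hg : HasDerivAt (fun t : ℝ => ((x₁, t) : ℝ × ℝ)) ((0:ℝ), (1:ℝ)) x₂ :=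
    (hasDerivAt_const x₂ x₁).prodMk (hasDerivAt_id x₂)
  have := hf.comp_hasDerivAt x₂ hg
  simp [dCLM_apply] at this
  exact this

lemma contDiffAt_UU_one (k : ℂ) (hk : 0 ≤ (k ^ 2).im) (h : ℝ) (F : SchwartzMap ℝ ℂ)
    {c : ℝ → ℂ} (hc : Good k c) (p : ℝ × ℝ) (hp : h < p.2) :
    ContDiffAt ℝ 1 (UU k h F c) p := by
  rw [show (1 : WithTop ℕ∞) = (0:ℕ) + 1 from rfl, contDiffAt_succ_iff_hasFDerivAt]
  set c₁ : ℝ → ℂ := fun ξ => Complex.I * (ξ:ℂ) * c ξ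
  set c₂ : ℝ → ℂ := fun ξ => Complex.I * rr k ξ * c ξ
  refine ⟨fun q => dCLM (UU k h F c₁ q) (UU k h F c₂ q),
    ⟨{q : ℝ × ℝ | h < q.2}, (isOpen_lt continuous_const continuous_snd).mem_nhds hp,
      fun q hq => hasFDerivAt_UU k hk h F hc q hq⟩, ?_⟩
  rw [show ((0:ℕ) : WithTop ℕ∞) = 0 from rfl, contDiffAt_zero]
  refine ⟨{q : ℝ × ℝ | h < q.2}, (isOpen_lt continuous_const continuous_snd).mem_nhds hp, ?_⟩
  intro q hq
  have hA := ContinuousLinearMap.smulRightL ℝ (ℝ × ℝ) ℂ (ContinuousLinearMap.fst ℝ ℝ ℝ)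
  apply ContinuousAt.continuousWithinAt
  have hcA : ContinuousAt (fun q => (ContinuousLinearMap.smulRightL ℝ (ℝ × ℝ) ℂ
      (ContinuousLinearMap.fst ℝ ℝ ℝ)) (UU k h F c₁ q)) q :=
    (ContinuousLinearMap.smulRightL ℝ (ℝ × ℝ) ℂ
      (ContinuousLinearMap.fst ℝ ℝ ℝ)).continuous.continuousAt.comp
      (continuousAt_UU k h F (good_mul_xi k hc) q hq)
  have hcB : ContinuousAt (fun q => (ContinuousLinearMap.smulRightL ℝ (ℝ × ℝ) ℂ
      (ContinuousLinearMap.snd ℝ ℝ ℝ)) (UU k h F c₂ q)) q :=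
    (ContinuousLinearMap.smulRightL ℝ (ℝ × ℝ) ℂ
      (ContinuousLinearMap.snd ℝ ℝ ℝ)).continuous.continuousAt.comp
      (continuousAt_UU k h F (good_mul_rr k hk hc) q hq)
  exact hcA.add hcB

lemma contDiffAt_UU_two (k : ℂ) (hk : 0 ≤ (k ^ 2).im) (h : ℝ) (F : SchwartzMap ℝ ℂ)
    {c : ℝ → ℂ} (hc : Good k c) (p : ℝ × ℝ) (hp : h < p.2) :
    ContDiffAt ℝ 2 (UU k h F c) p := by
  rw [show (2 : WithTop ℕ∞) = (1:ℕ) + 1 from rfl, contDiffAt_succ_iff_hasFDerivAt]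
  set c₁ : ℝ → ℂ := fun ξ => Complex.I * (ξ:ℂ) * c ξ
  set c₂ : ℝ → ℂ := fun ξ => Complex.I * rr k ξ * c ξ
  refine ⟨fun q => dCLM (UU k h F c₁ q) (UU k h F c₂ q),
    ⟨{q : ℝ × ℝ | h < q.2}, (isOpen_lt continuous_const continuous_snd).mem_nhds hp,
      fun q hq => hasFDerivAt_UU k hk h F hc q hq⟩, ?_⟩
  have hA : ContDiffAt ℝ 1 (fun q => (ContinuousLinearMap.smulRightL ℝ (ℝ × ℝ) ℂ
      (ContinuousLinearMap.fst ℝ ℝ ℝ)) (UU k h F c₁ q)) p :=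
    (ContinuousLinearMap.smulRightL ℝ (ℝ × ℝ) ℂ
      (ContinuousLinearMap.fst ℝ ℝ ℝ)).contDiff.comp_contDiffAt p
      (contDiffAt_UU_one k hk h F (good_mul_xi k hc) p hp)
  have hB : ContDiffAt ℝ 1 (fun q => (ContinuousLinearMap.smulRightL ℝ (ℝ × ℝ) ℂ
      (ContinuousLinearMap.snd ℝ ℝ ℝ)) (UU k h F c₂ q)) p :=
    (ContinuousLinearMap.smulRightL ℝ (ℝ × ℝ) ℂ
      (ContinuousLinearMap.snd ℝ ℝ ℝ)).contDiff.comp_contDiffAt p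
      (contDiffAt_UU_one k hk h F (good_mul_rr k hk hc) p hp)
  exact hA.add hB

noncomputable def asr (k : ℂ) (h : ℝ) (F : SchwartzMap ℝ ℂ) (p : ℝ × ℝ) : ℂ :=
  ∫ ξ : ℝ, Complex.exp (Complex.I *
    (((p.2 - h : ℝ) : ℂ) * rho (k ^ 2 - (ξ : ℂ) ^ 2) + (p.1 : ℂ) * (ξ : ℂ))) * F ξ

lemma asr_eq_UU (k : ℂ) (h : ℝ) (F : SchwartzMap ℝ ℂ) :
    asr k h F = UU k h F (fun _ => 1) := by
  funext p
  unfold asr UU ee rr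
  simp only [one_mul]

/-- The angular spectrum representation solves the Helmholtz equation: `u` is twice
continuously differentiable on the open half-plane `{x₂ > h}` and satisfies
`∂²u/∂x₁² + ∂²u/∂x₂² + k² u = 0` there. -/
theorem asr_solves_helmholtz (k : ℂ) (hk : 0 ≤ (k ^ 2).im) (h : ℝ) (F : SchwartzMap ℝ ℂ) :
    ContDiffOn ℝ 2 (asr k h F) {p : ℝ × ℝ | h < p.2} ∧
      ∀ p : ℝ × ℝ, h < p.2 →
        deriv (fun x₁ : ℝ => deriv (fun s : ℝ => asr k h F (s, p.2)) x₁) p.1 +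
          deriv (fun x₂ : ℝ => deriv (fun t : ℝ => asr k h F (p.1, t)) x₂) p.2 +
          k ^ 2 * asr k h F p = 0 := by
  have hg0 : Good k (fun _ => 1) := good_one k
  have hg1 : Good k (fun ξ => Complex.I * (ξ:ℂ) * (fun _ : ℝ => (1:ℂ)) ξ) := good_mul_xi k hg0
  have hg2 : Good k (fun ξ => Complex.I * rr k ξ * (fun _ : ℝ => (1:ℂ)) ξ) :=
    good_mul_rr k hk hg0
  have hg11 : Good k (fun ξ => Complex.I * (ξ:ℂ) *
      (Complex.I * (ξ:ℂ) * (fun _ : ℝ => (1:ℂ)) ξ)) := good_mul_xi k hg1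
  have hg22 : Good k (fun ξ => Complex.I * rr k ξ *
      (Complex.I * rr k ξ * (fun _ : ℝ => (1:ℂ)) ξ)) := good_mul_rr k hk hg2
  constructor
  · rw [asr_eq_UU]
    intro p hp
    exact (contDiffAt_UU_two k hk h F hg0 p hp).contDiffWithinAt
  · intro p hp
    have hd1 : deriv (fun x₁ : ℝ => deriv (fun s : ℝ => asr k h F (s, p.2)) x₁) p.1
        = UU k h F (fun ξ => Complex.I * (ξ:ℂ) *
            (Complex.I * (ξ:ℂ) * (fun _ : ℝ => (1:ℂ)) ξ)) p := by
      have e1 : (fun x₁ : ℝ => deriv (fun s : ℝ => asr k h F (s, p.2)) x₁)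
          = fun x₁ => UU k h F (fun ξ => Complex.I * (ξ:ℂ) * (fun _ : ℝ => (1:ℂ)) ξ)
              (x₁, p.2) := by
        funext x₁
        rw [asr_eq_UU]
        exact (hasDerivAt_UU_fst k hk h F hg0 x₁ p.2 hp).deriv
      rw [e1]
      have := (hasDerivAt_UU_fst k hk h F hg1 p.1 p.2 hp).deriv
      rw [this]
    have hd2 : deriv (fun x₂ : ℝ => deriv (fun t : ℝ => asr k h F (p.1, t)) x₂) p.2
        = UU k h F (fun ξ => Complex.I * rr k ξ *
            (Complex.I * rr k ξ * (fun _ : ℝ => (1:ℂ)) ξ)) p := by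
      have e2 : (fun x₂ : ℝ => deriv (fun t : ℝ => asr k h F (p.1, t)) x₂)
          =ᶠ[nhds p.2] fun x₂ => UU k h F
              (fun ξ => Complex.I * rr k ξ * (fun _ : ℝ => (1:ℂ)) ξ) (p.1, x₂) := by
        filter_upwards [eventually_gt_nhds hp] with x₂ hx₂
        rw [asr_eq_UU]
        exact (hasDerivAt_UU_snd k hk h F hg0 p.1 x₂ hx₂).deriv
      rw [e2.deriv_eq]
      have := (hasDerivAt_UU_snd k hk h F hg2 p.1 p.2 hp).deriv
      rw [this]
    rw [hd1, hd2, asr_eq_UU]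
    have hint11 := integrand_integrable k h F hg11 p hp.le
    have hint22 := integrand_integrable k h F hg22 p hp.le
    have hint0 := integrand_integrable k h F hg0 p hp.le
    unfold UU
    beta_reduce
    have hint11' : Integrable (fun ξ : ℝ =>
        ee k h p ξ * (Complex.I * (ξ:ℂ) * (Complex.I * (ξ:ℂ) * 1) * F ξ)) volume := by
      simpa using hint11
    have hint22' : Integrable (fun ξ : ℝ =>
        ee k h p ξ * (Complex.I * rr k ξ * (Complex.I * rr k ξ * 1) * F ξ)) volume := by
      simpa using hint22
    have h12 : Integrable (fun ξ : ℝ =>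
        ee k h p ξ * (Complex.I * (ξ:ℂ) * (Complex.I * (ξ:ℂ) * 1) * F ξ)
        + ee k h p ξ * (Complex.I * rr k ξ * (Complex.I * rr k ξ * 1) * F ξ)) volume :=
      hint11'.add hint22'
    have h0' : Integrable (fun ξ : ℝ => k ^ 2 * (ee k h p ξ * (1 * F ξ))) volume :=
      hint0.const_mul (k ^ 2)
    rw [← integral_const_mul (k ^ 2), ← integral_add hint11' hint22',
      ← integral_add h12 h0']
    have hzero : ∀ ξ : ℝ,
        (ee k h p ξ * ((Complex.I * (ξ:ℂ) * (Complex.I * (ξ:ℂ) * 1)) * F ξ)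
          + ee k h p ξ * ((Complex.I * rr k ξ * (Complex.I * rr k ξ * 1)) * F ξ))
          + k ^ 2 * (ee k h p ξ * (1 * F ξ)) = 0 := by
      intro ξ
      have hr := rr_sq k hk ξ
      have hco : (Complex.I * (ξ:ℂ) * (Complex.I * (ξ:ℂ) * 1))
          + (Complex.I * rr k ξ * (Complex.I * rr k ξ * 1)) + k ^ 2 = 0 := by
        linear_combination ((ξ:ℂ) ^ 2 + (rr k ξ) ^ 2) * Complex.I_sq - hr
      calc (ee k h p ξ * ((Complex.I * (ξ:ℂ) * (Complex.I * (ξ:ℂ) * 1)) * F ξ)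
          + ee k h p ξ * ((Complex.I * rr k ξ * (Complex.I * rr k ξ * 1)) * F ξ))
          + k ^ 2 * (ee k h p ξ * (1 * F ξ))
          = ee k h p ξ * F ξ * ((Complex.I * (ξ:ℂ) * (Complex.I * (ξ:ℂ) * 1))
            + (Complex.I * rr k ξ * (Complex.I * rr k ξ * 1)) + k ^ 2) := by ring
        _ = 0 := by rw [hco, mul_zero]
    simp only [hzero]
    exact integral_zero ℝ ℂ
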